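/- Let φ : ℤ/2[w₂,…,wₙ] → ℤ/2[w₁,…,w_{n-1}] be the ℤ/2-algebra homomorphism sending w_i ↦ w_i + w₁w_{i-1} for 2 ≤ i ≤ n−1 and wₙ ↦ w₁w_{n-1}. Then φ is injective. -/

import Mathlib

open MvPolynomial


noncomputable def gpoly (m : ℕ) (i : Fin (m + 1)) :
    Polynomial (MvPolynomial (Fin m) (ZMod 2)) :=
  Polynomial.X ^ ((i : ℕ) + 1) +
    ∑ k : Fin m, if (k : ℕ) < (i : ℕ) then
      Polynomial.X ^ ((i : ℕ) - 1 - (k : ℕ)) * Polynomial.C (X k) else 0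

lemma gpoly_zero (m : ℕ) : gpoly m 0 = Polynomial.X := by
  simp [gpoly]

lemma gpoly_succ (m : ℕ) (i : Fin (m + 1)) (h : (i : ℕ) + 1 < m + 1) :
    gpoly m ⟨(i : ℕ) + 1, h⟩ + gpoly m 0 * gpoly m i
      = Polynomial.C (X (⟨(i : ℕ), by omega⟩ : Fin m)) := by
  rw [gpoly_zero]
  unfold gpoly
  have hterm : ∀ k : Fin m,
      (if (k : ℕ) < (i : ℕ) + 1 then
        Polynomial.X ^ ((i : ℕ) + 1 - 1 - (k : ℕ)) * Polynomial.C (X k) else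
        (0 : Polynomial (MvPolynomial (Fin m) (ZMod 2))))
      = (if k = (⟨(i : ℕ), by omega⟩ : Fin m) then Polynomial.C (X k) else 0)
        + Polynomial.X *
          (if (k : ℕ) < (i : ℕ) then
            Polynomial.X ^ ((i : ℕ) - 1 - (k : ℕ)) * Polynomial.C (X k) else 0) := by
    intro k
    rcases lt_trichotomy (k : ℕ) (i : ℕ) with hk | hk | hk
    · rw [if_pos (show (k : ℕ) < (i : ℕ) + 1 by omega),
        if_neg (Fin.ne_of_val_ne (show (k : ℕ) ≠ (i : ℕ) by omega)),
        if_pos hk, zero_add,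
        show (i : ℕ) + 1 - 1 - (k : ℕ) = ((i : ℕ) - 1 - (k : ℕ)) + 1 by omega,
        pow_succ', mul_assoc]
    · rw [if_pos (show (k : ℕ) < (i : ℕ) + 1 by omega),
        if_pos (Fin.ext (show (k : ℕ) = (i : ℕ) by omega)),
        if_neg (show ¬ (k : ℕ) < (i : ℕ) by omega)]
      simp [show (i : ℕ) - (k : ℕ) = 0 by omega]
    · rw [if_neg (show ¬ (k : ℕ) < (i : ℕ) + 1 by omega),
        if_neg (Fin.ne_of_val_ne (show (k : ℕ) ≠ (i : ℕ) by omega)),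
        if_neg (show ¬ (k : ℕ) < (i : ℕ) by omega)]
      simp
  simp only [hterm]
  rw [Finset.sum_add_distrib, ← Finset.mul_sum, Finset.sum_ite_eq' Finset.univ]
  simp only [Finset.mem_univ, if_pos]
  have h2 : (2 : Polynomial (MvPolynomial (Fin m) (ZMod 2))) = 0 := by
    rw [← map_ofNat (algebraMap (ZMod 2) (Polynomial (MvPolynomial (Fin m) (ZMod 2)))) 2,
      show (2 : ZMod 2) = 0 by decide, map_zero]
  linear_combination (Polynomial.X ^ ((i : ℕ) + 1 + 1) +
    Polynomial.X * ∑ k : Fin m, if (k : ℕ) < (i : ℕ) then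
      Polynomial.X ^ ((i : ℕ) - 1 - (k : ℕ)) * Polynomial.C (X k) else 0) * h2

noncomputable def fpoly (m : ℕ) : Polynomial (MvPolynomial (Fin m) (ZMod 2)) :=
  Polynomial.X * gpoly m (Fin.last m)

lemma gpoly_last_degree_lt (m : ℕ) :
    (∑ k : Fin m, if (k : ℕ) < ((Fin.last m : Fin (m+1)) : ℕ) then
      Polynomial.X ^ (((Fin.last m : Fin (m+1)) : ℕ) - 1 - (k : ℕ)) *
        Polynomial.C (X k : MvPolynomial (Fin m) (ZMod 2)) else 0).degree
      < ((m + 1 : ℕ) : WithBot ℕ) := by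
  refine lt_of_le_of_lt (Polynomial.degree_sum_le _ _) ?_
  rw [Finset.sup_lt_iff (by exact_mod_cast WithBot.bot_lt_coe (m+1))]
  intro k _
  split_ifs
  · refine lt_of_le_of_lt (Polynomial.degree_mul_le _ _) ?_
    refine lt_of_le_of_lt (add_le_add (le_of_eq (Polynomial.degree_X_pow _))
      Polynomial.degree_C_le) ?_
    rw [add_zero]
    exact_mod_cast Nat.lt_succ_of_le (by omega)
  · exact lt_of_le_of_lt (le_of_eq Polynomial.degree_zero)
      (by exact_mod_cast WithBot.bot_lt_coe (m+1))

lemma gpoly_last_monic (m : ℕ) : (gpoly m (Fin.last m)).Monic := by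
  unfold gpoly
  exact Polynomial.monic_X_pow_add (by simpa using gpoly_last_degree_lt m)

lemma fpoly_monic (m : ℕ) : (fpoly m).Monic :=
  (Polynomial.monic_X).mul (gpoly_last_monic m)

lemma fpoly_natDegree (m : ℕ) : (fpoly m).natDegree = m + 2 := by
  rw [fpoly, Polynomial.Monic.natDegree_mul Polynomial.monic_X (gpoly_last_monic m),
    Polynomial.natDegree_X]
  have : (gpoly m (Fin.last m)).degree = (m + 1 : ℕ) := by
    unfold gpoly
    rw [Polynomial.degree_add_eq_left_of_degree_lt, Polynomial.degree_X_pow]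
    · simp
    · rw [Polynomial.degree_X_pow]
      simpa using gpoly_last_degree_lt m
  rw [Polynomial.natDegree_eq_of_degree_eq_some this]
  omega

lemma fpoly_transcendental (m : ℕ) :
    Transcendental (MvPolynomial (Fin m) (ZMod 2)) (fpoly m) := by
  refine Polynomial.transcendental _ (by rw [fpoly_natDegree]; omega) ?_
  rw [(fpoly_monic m).leadingCoeff]
  exact one_mem _

/-- The homomorphism `t(κ*) : ℤ/2[w₂,…,wₙ] → ℤ/2[w₁,…,w_{n-1}]` (with `n = m + 2`),
sending `wᵢ ↦ wᵢ + w₁w_{i-1}` for `2 ≤ i ≤ n-1` and `wₙ ↦ w₁w_{n-1}`.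
The domain has variables indexed by `Fin (m+1)` where index `i` stands for `w_{i+2}`,
and the codomain has variables indexed by `Fin (m+1)` where index `j` stands for `w_{j+1}`. -/
noncomputable def kappaStar (m : ℕ) :
    MvPolynomial (Fin (m + 1)) (ZMod 2) →ₐ[ZMod 2] MvPolynomial (Fin (m + 1)) (ZMod 2) :=
  MvPolynomial.aeval (fun i : Fin (m + 1) =>
    if h : (i : ℕ) + 1 < m + 1 then X (⟨(i : ℕ) + 1, h⟩ : Fin (m + 1)) + X 0 * X i
    else X 0 * X i)

noncomputable def wfam (m : ℕ) (j : Fin (m + 1)) :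
    Polynomial (MvPolynomial (Fin m) (ZMod 2)) :=
  if h : (j : ℕ) < m then Polynomial.C (X ⟨(j : ℕ), h⟩) else fpoly m

lemma hcomp (m : ℕ) :
    (MvPolynomial.aeval (gpoly m)).comp (kappaStar m) = MvPolynomial.aeval (wfam m) := by
  unfold kappaStar
  rw [comp_aeval]
  congr 1
  funext i
  by_cases h : (i : ℕ) + 1 < m + 1
  · rw [dif_pos h]
    simp only [map_add, map_mul, aeval_X]
    rw [gpoly_succ m i h, wfam, dif_pos (show (i : ℕ) < m by omega)]
  · rw [dif_neg h]
    simp only [map_mul, aeval_X]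
    have hi : i = Fin.last m := Fin.ext (by simp; omega)
    rw [hi, gpoly_zero, wfam, dif_neg (by simp)]
    rfl

lemma wfam_aeval_eq (m : ℕ) :
    (MvPolynomial.aeval (wfam m) :
        MvPolynomial (Fin (m + 1)) (ZMod 2) →ₐ[ZMod 2] _)
      = ((Polynomial.aeval (fpoly m)).restrictScalars (ZMod 2)).comp
          ((optionEquivLeft (ZMod 2) (Fin m)).toAlgHom.comp
            (renameEquiv (ZMod 2) finSuccEquivLast).toAlgHom) := by
  apply algHom_ext
  intro j
  simp only [aeval_X, AlgHom.coe_comp, Function.comp_apply, AlgEquiv.toAlgHom_eq_coe,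
    AlgHom.coe_coe, renameEquiv_apply, rename_X, AlgHom.coe_restrictScalars']
  erw [renameEquiv_apply, rename_X]
  induction j using Fin.lastCases with
  | last =>
      rw [finSuccEquivLast_last]; erw [optionEquivLeft_X_none]; rw [Polynomial.aeval_X, wfam,
        dif_neg (by simp)]
  | cast j' =>
      rw [finSuccEquivLast_castSucc]; erw [optionEquivLeft_X_some]; rw [Polynomial.aeval_C, wfam,
        dif_pos (by simp [Fin.is_lt])]
      simp [Polynomial.algebraMap_apply]

/-- The homomorphism `φ = t(κ*) : ℤ/2[w₂,…,wₙ] → ℤ/2[w₁,…,w_{n-1}]`,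
`wᵢ ↦ wᵢ + w₁w_{i-1}` (for `2 ≤ i ≤ n-1`), `wₙ ↦ w₁w_{n-1}`, is injective. -/
theorem kappaStar_injective (m : ℕ) :
    Function.Injective (kappaStar m) := by
  have hw : Function.Injective ⇑(MvPolynomial.aeval (wfam m) :
      MvPolynomial (Fin (m + 1)) (ZMod 2) →ₐ[ZMod 2] _) := by
    rw [wfam_aeval_eq]
    simp only [AlgHom.coe_comp, AlgHom.coe_restrictScalars', AlgEquiv.toAlgHom_eq_coe,
      AlgHom.coe_coe]
    exact (transcendental_iff_injective.mp (fpoly_transcendental m)).comp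
      ((optionEquivLeft (ZMod 2) (Fin m)).injective.comp
        (renameEquiv (ZMod 2) finSuccEquivLast).injective)
  have h2 : Function.Injective
      (⇑(MvPolynomial.aeval (gpoly m)) ∘ ⇑(kappaStar m)) := by
    rw [← AlgHom.coe_comp, hcomp]
    exact hw
  exact Function.Injective.of_comp h2
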